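/- For any λ, c > 0 and β ∈ ℝ, the function v(θ) = c(λ²cos²(θ-β) + λ^{-2}sin²(θ-β))^{3/2} satisfies the equation v'''' + 10v'' + 9v = τ v^{-5/3} on ℝ for some constant τ > 0, and satisfies ∫₀^{2π} cos³(θ + α) v(θ)^{-5/3} dθ = 0 for every α. -/

import Mathlib

set_option maxHeartbeats 1000000

open Real intervalIntegral

theorem stmt13 (lam c β : ℝ) (hlam : 0 < lam) (hc : 0 < c) (v : ℝ → ℝ)
    (hv : ∀ θ, v θ = c * (lam^2 * Real.cos (θ - β)^2
        + lam⁻¹^2 * Real.sin (θ - β)^2) ^ ((3:ℝ)/2)) :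
    ∃ τ : ℝ, 0 < τ ∧
      (∀ θ, iteratedDeriv 4 v θ + 10 * iteratedDeriv 2 v θ + 9 * v θ
          = τ * v θ ^ (-(5:ℝ)/3)) ∧
      ∀ α : ℝ, (∫ θ in (0:ℝ)..(2 * Real.pi),
          Real.cos (θ + α)^3 * v θ ^ (-(5:ℝ)/3)) = 0 := by
  have hl2 : (0:ℝ) < lam ^ 2 := by positivity
  have hli : (0:ℝ) < lam⁻¹ ^ 2 := by positivity
  set A : ℝ := (lam^2 + lam⁻¹^2)/2 with hA
  set B : ℝ := (lam^2 - lam⁻¹^2)/2 with hB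
  have hAB : A ^ 2 - B ^ 2 = 1 := by
    rw [hA, hB]
    have : lam ^ 2 * lam⁻¹ ^ 2 = 1 := by
      field_simp
    nlinarith [this]
  set S : ℝ → ℝ := fun θ => Real.sin (2*(θ-β)) with hS
  set C : ℝ → ℝ := fun θ => Real.cos (2*(θ-β)) with hC
  set f : ℝ → ℝ := fun θ => A + B * C θ with hf
  have hfe : ∀ θ, f θ = lam^2 * Real.cos (θ - β)^2 + lam⁻¹^2 * Real.sin (θ - β)^2 := by
    intro θ
    have h1 : C θ = 2 * Real.cos (θ-β)^2 - 1 := Real.cos_two_mul _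
    have h2 : Real.sin (θ-β)^2 = 1 - Real.cos (θ-β)^2 := by
      nlinarith [Real.sin_sq_add_cos_sq (θ-β)]
    rw [hf]; simp only []
    rw [h1, h2, hA, hB]; ring
  have hfpos : ∀ θ, 0 < f θ := by
    intro θ
    rw [hfe θ]
    rcases eq_or_ne (Real.cos (θ-β)) 0 with h | h
    · have hs2 : Real.sin (θ-β)^2 = 1 := by nlinarith [Real.sin_sq_add_cos_sq (θ-β)]
      rw [h, hs2]; nlinarith
    · have : 0 < Real.cos (θ-β)^2 := by positivity
      nlinarith [sq_nonneg (Real.sin (θ-β)), mul_nonneg hli.le (sq_nonneg (Real.sin (θ-β)))]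
  set g : ℝ → ℝ := fun θ => f θ ^ ((1:ℝ)/2) with hg
  have hgpos : ∀ θ, 0 < g θ := fun θ => Real.rpow_pos_of_pos (hfpos θ) _
  have hg2 : ∀ θ, g θ ^ 2 = f θ := by
    intro θ
    rw [hg]; simp only []
    rw [← Real.rpow_natCast (f θ ^ ((1:ℝ)/2)) 2, ← Real.rpow_mul (hfpos θ).le]
    norm_num
  have hveq : ∀ θ, v θ = c * g θ ^ 3 := by
    intro θ
    rw [hv θ, ← hfe θ, hg]; simp only []
    rw [← Real.rpow_natCast (f θ ^ ((1:ℝ)/2)) 3, ← Real.rpow_mul (hfpos θ).le]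
    norm_num
  have hlin : ∀ θ : ℝ, HasDerivAt (fun t => 2*(t-β)) 2 θ := by
    intro θ
    simpa using ((hasDerivAt_id θ).sub_const β).const_mul 2
  have hSd : ∀ θ, HasDerivAt S (2 * C θ) θ := by
    intro θ
    have := (Real.hasDerivAt_sin (2*(θ-β))).comp θ (hlin θ)
    rw [hS, hC]
    refine this.congr_deriv ?_
    ring
  have hCd : ∀ θ, HasDerivAt C (-(2 * S θ)) θ := by
    intro θ
    have := (Real.hasDerivAt_cos (2*(θ-β))).comp θ (hlin θ)
    rw [hS, hC]
    refine this.congr_deriv ?_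
    ring
  have hfd : ∀ θ, HasDerivAt f (-(2*B*S θ)) θ := by
    intro θ
    have := ((hCd θ).const_mul B).const_add A
    refine this.congr_deriv ?_
    ring
  have hgd : ∀ θ, HasDerivAt g (-(B * S θ) / g θ) θ := by
    intro θ
    have h := (hfd θ).rpow_const (p := (1:ℝ)/2) (Or.inl (hfpos θ).ne')
    have h5 : f θ ^ ((1:ℝ)/2 - 1) = (g θ)⁻¹ := by
      rw [show (1:ℝ)/2 - 1 = -(1/2) by norm_num, Real.rpow_neg (hfpos θ).le, hg]
    rw [hg]
    convert h using 1
    rw [h5]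
    field_simp
    ring
  set v1 : ℝ → ℝ := fun θ => -(3*c*B) * (S θ * g θ) with hv1
  set v2 : ℝ → ℝ := fun θ => (-(6*c*B) * (C θ * g θ^2) + 3*c*B^2 * S θ^2) / g θ with hv2
  set v3 : ℝ → ℝ := fun θ => (12*c*B*(S θ*g θ^4) + 18*c*B^2*(S θ*C θ*g θ^2)
      + 3*c*B^3*S θ^3) / g θ^3 with hv3
  set v4 : ℝ → ℝ := fun θ => (24*c*B*(C θ*g θ^6)
      + (36*c*B^2*(C θ^2 - S θ^2) - 12*c*B^2*S θ^2)*g θ^4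
      + 36*c*B^3*(S θ^2*C θ*g θ^2) + 9*c*B^4*S θ^4) / g θ^5 with hv4
  have hvfun : v = fun t => c * g t ^ 3 := funext hveq
  have hD1 : ∀ θ, HasDerivAt v (v1 θ) θ := by
    intro θ
    rw [hvfun, hv1]
    have := ((hgd θ).pow 3).const_mul c
    refine this.congr_deriv ?_
    have := (hgpos θ).ne'
    field_simp
    ring
  have hD2 : ∀ θ, HasDerivAt v1 (v2 θ) θ := by
    intro θ
    rw [hv1, hv2]
    have := ((hSd θ).mul (hgd θ)).const_mul (-(3*c*B))
    refine this.congr_deriv ?_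
    have := (hgpos θ).ne'
    field_simp
    ring
  have hD3 : ∀ θ, HasDerivAt v2 (v3 θ) θ := by
    intro θ
    rw [hv2, hv3]
    have hgne := (hgpos θ).ne'
    have hnum : HasDerivAt (fun t => -(6*c*B) * (C t * g t^2) + 3*c*B^2 * S t^2)
        (-(6*c*B) * ((-(2 * S θ)) * g θ^2 + C θ * (2 * g θ^1 * (-(B * S θ) / g θ)))
          + 3*c*B^2 * (2 * S θ^1 * (2 * C θ))) θ :=
      (((hCd θ).mul ((hgd θ).pow 2)).const_mul (-(6*c*B))).add
        (((hSd θ).pow 2).const_mul (3*c*B^2))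
    have := hnum.div (hgd θ) hgne
    refine this.congr_deriv ?_
    field_simp
    ring
  have hD4 : ∀ θ, HasDerivAt v3 (v4 θ) θ := by
    intro θ
    rw [hv3, hv4]
    have hgne := (hgpos θ).ne'
    have hnum : HasDerivAt (fun t => 12*c*B*(S t*g t^4) + 18*c*B^2*(S t*C t*g t^2)
          + 3*c*B^3*S t^3)
        (12*c*B*((2 * C θ) * g θ^4 + S θ * (4 * g θ^3 * (-(B * S θ) / g θ)))
          + 18*c*B^2*(((2 * C θ) * C θ + S θ * (-(2 * S θ))) * g θ^2
            + S θ * C θ * (2 * g θ^1 * (-(B * S θ) / g θ)))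
          + 3*c*B^3*(3 * S θ^2 * (2 * C θ))) θ := by
      exact ((((hSd θ).mul ((hgd θ).pow 4)).const_mul (12*c*B)).add
        ((((hSd θ).mul (hCd θ)).mul ((hgd θ).pow 2)).const_mul (18*c*B^2))).add
        (((hSd θ).pow 3).const_mul (3*c*B^3))
    have := hnum.div ((hgd θ).pow 3) (pow_ne_zero 3 hgne)
    refine this.congr_deriv ?_
    simp only [Pi.pow_apply]
    field_simp
    ring
  have hd2 : iteratedDeriv 2 v = v2 := by
    rw [show (2:ℕ) = 0+1+1 by rfl, iteratedDeriv_succ, iteratedDeriv_succ, iteratedDeriv_zero]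
    rw [funext fun θ => (hD1 θ).deriv]
    exact funext fun θ => (hD2 θ).deriv
  have hd4 : iteratedDeriv 4 v = v4 := by
    rw [show (4:ℕ) = 0+1+1+1+1 by rfl, iteratedDeriv_succ, iteratedDeriv_succ,
      iteratedDeriv_succ, iteratedDeriv_succ, iteratedDeriv_zero]
    rw [funext fun θ => (hD1 θ).deriv, funext fun θ => (hD2 θ).deriv,
      funext fun θ => (hD3 θ).deriv]
    exact funext fun θ => (hD4 θ).deriv
  have hvpow : ∀ θ, v θ ^ (-(5:ℝ)/3) = c ^ (-(5:ℝ)/3) * (g θ ^ 5)⁻¹ := by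
    intro θ
    rw [hveq θ, Real.mul_rpow hc.le (pow_nonneg (hgpos θ).le 3)]
    congr 1
    rw [← Real.rpow_natCast (g θ) 3, ← Real.rpow_mul (hgpos θ).le,
      show (3:ℕ) * (-(5:ℝ)/3) = -(5:ℝ) by norm_num, Real.rpow_neg (hgpos θ).le,
      show (5:ℝ) = ((5:ℕ):ℝ) by norm_num, Real.rpow_natCast]
  have hτc : 9 * c ^ ((8:ℝ)/3) * c ^ (-(5:ℝ)/3) = 9 * c := by
    rw [mul_assoc, ← Real.rpow_add hc]
    norm_num
  refine ⟨9 * c ^ ((8:ℝ)/3), by positivity, ?_, ?_⟩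
  · intro θ
    rw [hd2, hd4, hvpow θ, ← mul_assoc, hτc, hveq θ, hv2, hv4]
    have hgne := (hgpos θ).ne'
    have h2 := hg2 θ
    rw [hf] at h2
    simp only [] at h2 ⊢
    have hs : S θ^2 + C θ^2 = 1 := Real.sin_sq_add_cos_sq (2*(θ-β))
    have hnum : (24*c*B*(C θ*g θ^6)
        + (36*c*B^2*(C θ^2 - S θ^2) - 12*c*B^2*S θ^2)*g θ^4
        + 36*c*B^3*(S θ^2*C θ*g θ^2) + 9*c*B^4*S θ^4)
        + 10 * (-(6*c*B) * (C θ * g θ^2) + 3*c*B^2 * S θ^2) * g θ^4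
        + 9*c*g θ^8 = 9*c := by
      linear_combination ((9*A^3*c) + (-18*S θ^2*A*B^2*c) + (-9*C θ*A^2*B*c) + (18*C θ*S θ^2*B^3*c) + (-9*C θ^2*A*B^2*c) + (9*C θ^3*B^3*c) + (9*g θ^2*A^2*c) + (-18*g θ^2*S θ^2*B^2*c) + (-18*g θ^2*C θ*A*B*c) + (9*g θ^2*C θ^2*B^2*c) + (9*g θ^4*A*c) + (-27*g θ^4*C θ*B*c) + (9*g θ^6*c)) * h2 + ((9*B^4*c) + (-18*A^2*B^2*c) + (9*S θ^2*B^4*c) + (9*C θ^2*B^4*c)) * hs + ((9*c) + (-9*B^2*c) + (9*A^2*c)) * hAB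
    rw [show (9:ℝ) * c * (g θ ^ 5)⁻¹ = 9*c/g θ^5 from (div_eq_mul_inv _ _).symm]
    nth_rewrite 2 [← hnum]
    field_simp
  · intro α
    set F : ℝ → ℝ := fun θ => Real.cos (θ + α)^3 * v θ ^ (-(5:ℝ)/3) with hF
    have hcontf : Continuous f := by
      rw [hf, hC]
      fun_prop
    have hcontg : Continuous g := by
      rw [hg]
      exact hcontf.rpow_const (fun x => Or.inl (hfpos x).ne')
    have hcontF : Continuous F := by
      rw [hF]
      have h1 : (fun θ => v θ ^ (-(5:ℝ)/3)) = fun θ => c ^ (-(5:ℝ)/3) * (g θ^5)⁻¹ :=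
        funext hvpow
      have h2 : Continuous fun θ => v θ ^ (-(5:ℝ)/3) := by
        rw [h1]
        exact continuous_const.mul
          ((hcontg.pow 5).inv₀ (fun x => pow_ne_zero 5 (hgpos x).ne'))
      exact ((Real.continuous_cos.comp (continuous_id.add continuous_const)).pow 3).mul h2
    have hgper : ∀ θ, g (θ + Real.pi) = g θ := by
      intro θ
      rw [hg, hf, hC]
      simp only []
      rw [show 2*(θ + Real.pi - β) = 2*(θ-β) + 2*Real.pi by ring, Real.cos_add_two_pi]
    have hper : ∀ θ, F (θ + Real.pi) = -F θ := by
      intro θ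
      rw [hF]
      simp only []
      rw [hveq (θ + Real.pi), hgper θ, ← hveq θ,
        show θ + Real.pi + α = (θ + α) + Real.pi by ring, Real.cos_add_pi]
      ring
    have hint1 : IntervalIntegrable F MeasureTheory.volume 0 Real.pi :=
      hcontF.intervalIntegrable _ _
    have hint2 : IntervalIntegrable F MeasureTheory.volume Real.pi (2*Real.pi) :=
      hcontF.intervalIntegrable _ _
    have hsplit := intervalIntegral.integral_add_adjacent_intervals hint1 hint2
    have hshift : (∫ x in (0:ℝ)..Real.pi, F (x + Real.pi))
        = ∫ x in (0+Real.pi:ℝ)..(Real.pi+Real.pi), F x :=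
      intervalIntegral.integral_comp_add_right F Real.pi
    simp only [hper] at hshift
    rw [intervalIntegral.integral_neg] at hshift
    rw [zero_add] at hshift
    have h2pi : (∫ θ in Real.pi..(2*Real.pi), F θ) = - ∫ θ in (0:ℝ)..Real.pi, F θ := by
      rw [show (2*Real.pi) = Real.pi + Real.pi by ring]
      exact hshift.symm
    rw [← hsplit, h2pi]
    ring
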